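/- Let K be a field and c ∈ ℤⁿ with c⁺ ≠ 0 and c⁻ ≠ 0. Let I ⊆ S = K[x₁,…,xₙ] be an ideal homogeneous with respect to the ℤⁿ/ℤc-grading, let ≺ and ≺' be term orders with x^{c⁺} ≺ x^{c⁻} and x^{c⁺} ≻' x^{c⁻}, and set M = in_≺(I), N = in_{≺'}(I). If for some index i and some integer r ≥ 1 the monomial x_i^r lies in both M and N, then x_i^r ∈ I. -/

import Mathlib

open MvPolynomial

/-- A term order on the monomial exponents of `K[x₁,…,xₙ]`: a strict total order on
`Fin n →₀ ℕ` with `0` smallest and compatible with addition. -/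
def IsTermOrder (n : ℕ) (lt : (Fin n →₀ ℕ) → (Fin n →₀ ℕ) → Prop) : Prop :=
  (∀ u v : Fin n →₀ ℕ, lt u v ∨ u = v ∨ lt v u) ∧
  (∀ u v w : Fin n →₀ ℕ, lt u v → lt v w → lt u w) ∧
  (∀ u : Fin n →₀ ℕ, ¬ lt u u) ∧
  (∀ u : Fin n →₀ ℕ, u ≠ 0 → lt 0 u) ∧
  (∀ u v w : Fin n →₀ ℕ, lt u v → lt (u + w) (v + w))

/-- `u` is the exponent of the `lt`-leading monomial `in_≺(f)` of `f`. -/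
def IsLeadExp {n : ℕ} {K : Type*} [Field K] (lt : (Fin n →₀ ℕ) → (Fin n →₀ ℕ) → Prop)
    (f : MvPolynomial (Fin n) K) (u : Fin n →₀ ℕ) : Prop :=
  u ∈ f.support ∧ ∀ v ∈ f.support, v ≠ u → lt v u

/-- The initial ideal `in_≺(I)`, generated by the leading monomials of nonzero elements. -/
noncomputable def initialIdeal {n : ℕ} {K : Type*} [Field K]
    (lt : (Fin n →₀ ℕ) → (Fin n →₀ ℕ) → Prop) (I : Ideal (MvPolynomial (Fin n) K)) :
    Ideal (MvPolynomial (Fin n) K) :=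
  Ideal.span { p | ∃ f ∈ I, ∃ u, IsLeadExp lt f u ∧ p = monomial u 1 }

/-- `DistRel c u v ℓ` says that `u - v = ℓ·c` in `ℤⁿ`; then `d(x^u, x^v) = |ℓ|`. -/
def DistRel {n : ℕ} (c : Fin n → ℤ) (u v : Fin n →₀ ℕ) (ℓ : ℤ) : Prop :=
  ∀ i, (u i : ℤ) - (v i : ℤ) = ℓ * c i

/-- Two monomials have the same degree in the `ℤⁿ/ℤc`-grading iff `u - v ∈ ℤc`. -/
def SameDeg {n : ℕ} (c : Fin n → ℤ) (u v : Fin n →₀ ℕ) : Prop :=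
  ∃ ℓ : ℤ, DistRel c u v ℓ

/-- A polynomial is homogeneous for the `ℤⁿ/ℤc`-grading if all of its monomials
have the same degree. -/
def CHom {n : ℕ} {K : Type*} [Field K] (c : Fin n → ℤ) (f : MvPolynomial (Fin n) K) : Prop :=
  ∀ u ∈ f.support, ∀ v ∈ f.support, SameDeg c u v

/-- An ideal is homogeneous for the `ℤⁿ/ℤc`-grading if it is generated by homogeneous
elements. -/
def CHomIdeal {n : ℕ} {K : Type*} [Field K] (c : Fin n → ℤ)
    (I : Ideal (MvPolynomial (Fin n) K)) : Prop :=
  ∃ G : Set (MvPolynomial (Fin n) K), (∀ g ∈ G, CHom c g) ∧ I = Ideal.span G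

/-- The exponent vector `c⁺` of a vector `c ∈ ℤⁿ`. -/
noncomputable def cpos {n : ℕ} (c : Fin n → ℤ) : Fin n →₀ ℕ :=
  Finsupp.equivFunOnFinite.symm fun i => (c i).toNat

/-- The exponent vector `c⁻` of a vector `c ∈ ℤⁿ`. -/
noncomputable def cneg {n : ℕ} (c : Fin n → ℤ) : Fin n →₀ ℕ :=
  Finsupp.equivFunOnFinite.symm fun i => (-(c i)).toNat

/-- `Mon M`: the set of (exponents of) monomials lying in `M`. -/
def Mon {n : ℕ} {K : Type*} [Field K] (M : Ideal (MvPolynomial (Fin n) K)) :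
    Set (Fin n →₀ ℕ) :=
  { u | monomial u 1 ∈ M }

/-- `f` (as a map on exponent vectors) restricts to an arrow map `Mon M → Mon N`
with respect to the `ℤⁿ/ℤc`-grading and the term order `lt`:
(1) it is a degree-preserving bijection with `m ⪰ f(m)`;
(2) `d(m', f(m')) ≤ d(m, f(m))` for every multiple `m'` of `m ∈ Mon M`;
(3) `d(f⁻¹(m'), m') ≤ d(f⁻¹(m), m)` for every `m ∈ Mon N` and multiple `m'` of `m`. -/
def IsArrowMap {n : ℕ} {K : Type*} [Field K] (c : Fin n → ℤ)
    (lt : (Fin n →₀ ℕ) → (Fin n →₀ ℕ) → Prop)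
    (M N : Ideal (MvPolynomial (Fin n) K)) (f : (Fin n →₀ ℕ) → (Fin n →₀ ℕ)) : Prop :=
  Set.BijOn f (Mon M) (Mon N) ∧
  (∀ u ∈ Mon M, SameDeg c u (f u)) ∧
  (∀ u ∈ Mon M, f u = u ∨ lt (f u) u) ∧
  (∀ u ∈ Mon M, ∀ (w : Fin n →₀ ℕ) (ℓ ℓ' : ℤ),
    DistRel c u (f u) ℓ → DistRel c (u + w) (f (u + w)) ℓ' → |ℓ'| ≤ |ℓ|) ∧
  (∀ u ∈ Mon M, ∀ u' ∈ Mon M, ∀ (w : Fin n →₀ ℕ) (ℓ ℓ' : ℤ),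
    f u' = f u + w → DistRel c u (f u) ℓ → DistRel c u' (f u') ℓ' → |ℓ'| ≤ |ℓ|)

section Aux

variable {n : ℕ} {K : Type*} [Field K]

/-- Asymmetry of a term order. -/
lemma TermOrder.asymm {lt : (Fin n →₀ ℕ) → (Fin n →₀ ℕ) → Prop} (hlt : IsTermOrder n lt)
    {a b : Fin n →₀ ℕ} (h : lt a b) : ¬ lt b a :=
  fun h' => hlt.2.2.1 a (hlt.2.1 a b a h h')

/-- Cancellation for a term order. -/
lemma TermOrder.cancel {lt : (Fin n →₀ ℕ) → (Fin n →₀ ℕ) → Prop} (hlt : IsTermOrder n lt)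
    {a b w : Fin n →₀ ℕ} (h : lt (a + w) (b + w)) : lt a b := by
  rcases hlt.1 a b with hab | rfl | hba
  · exact hab
  · exact absurd h (hlt.2.2.1 _)
  · exact absurd (hlt.2.2.2.2 b a w hba) (TermOrder.asymm hlt h)

/-- Positive multiples preserve a term order. -/
lemma TermOrder.smul {lt : (Fin n →₀ ℕ) → (Fin n →₀ ℕ) → Prop} (hlt : IsTermOrder n lt)
    {a b : Fin n →₀ ℕ} (h : lt a b) (m : ℕ) : lt ((m + 1) • a) ((m + 1) • b) := by
  induction m with
  | zero => simpa using h
  | succ m ih =>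
    have h1 : lt ((m + 1) • a + a) ((m + 1) • b + a) := hlt.2.2.2.2 _ _ _ ih
    have h2 : lt ((m + 1) • b + a) ((m + 1) • b + b) := by
      have := hlt.2.2.2.2 a b ((m + 1) • b) h
      rwa [add_comm a, add_comm b] at this
    have := hlt.2.1 _ _ _ h1 h2
    rwa [← succ_nsmul, ← succ_nsmul] at this

lemma sameDeg_refl (c : Fin n → ℤ) (u : Fin n →₀ ℕ) : SameDeg c u u :=
  ⟨0, fun i => by simp⟩

lemma sameDeg_symm {c : Fin n → ℤ} {u v : Fin n →₀ ℕ} (h : SameDeg c u v) : SameDeg c v u := by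
  obtain ⟨ℓ, hℓ⟩ := h
  exact ⟨-ℓ, fun i => by have := hℓ i; linarith⟩

lemma sameDeg_trans {c : Fin n → ℤ} {u v w : Fin n →₀ ℕ}
    (h1 : SameDeg c u v) (h2 : SameDeg c v w) : SameDeg c u w := by
  obtain ⟨ℓ, hℓ⟩ := h1; obtain ⟨ℓ', hℓ'⟩ := h2
  exact ⟨ℓ + ℓ', fun i => by have := hℓ i; have := hℓ' i; push_cast; linarith⟩

lemma sameDeg_add_left {c : Fin n → ℤ} {u v : Fin n →₀ ℕ} (h : SameDeg c u v)
    (w : Fin n →₀ ℕ) : SameDeg c (w + u) (w + v) := by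
  obtain ⟨ℓ, hℓ⟩ := h
  refine ⟨ℓ, fun i => ?_⟩
  have := hℓ i
  simp only [Finsupp.add_apply]
  push_cast
  linarith

open Classical in
/-- `pfilter P f` keeps the terms of `f` whose exponents satisfy `P`. -/
noncomputable def pfilter (P : (Fin n →₀ ℕ) → Prop) (f : MvPolynomial (Fin n) K) :
    MvPolynomial (Fin n) K :=
  ∑ v ∈ f.support, if P v then monomial v (coeff v f) else 0

lemma coeff_pfilter (P : (Fin n →₀ ℕ) → Prop) (f : MvPolynomial (Fin n) K) (w : Fin n →₀ ℕ)
    [Decidable (P w)] : coeff w (pfilter P f) = if P w then coeff w f else 0 := by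
  classical
  rw [pfilter, coeff_sum, Finset.sum_eq_single w]
  · by_cases h : P w
    · rw [if_pos h, if_pos h, coeff_monomial, if_pos rfl]
    · rw [if_neg h, if_neg h, coeff_zero]
  · intro v _ hvw
    by_cases h : P v
    · rw [if_pos h, coeff_monomial, if_neg hvw]
    · rw [if_neg h, coeff_zero]
  · intro hw
    rw [MvPolynomial.notMem_support_iff] at hw
    split_ifs <;> simp [hw]

lemma pfilter_add (P : (Fin n →₀ ℕ) → Prop) (f g : MvPolynomial (Fin n) K) :
    pfilter P (f + g) = pfilter P f + pfilter P g := by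
  classical
  ext w
  simp only [coeff_pfilter, coeff_add]
  split_ifs <;> simp

lemma pfilter_zero (P : (Fin n →₀ ℕ) → Prop) : pfilter P (0 : MvPolynomial (Fin n) K) = 0 := by
  classical
  ext w
  simp only [coeff_pfilter, coeff_zero]
  split_ifs <;> rfl

lemma pfilter_finset_sum (P : (Fin n →₀ ℕ) → Prop) {X : Type*} (s : Finset X)
    (F : X → MvPolynomial (Fin n) K) :
    pfilter P (∑ x ∈ s, F x) = ∑ x ∈ s, pfilter P (F x) := by
  classical
  induction s using Finset.induction_on with
  | empty => simp [pfilter_zero]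
  | insert _ _ hx ih => rw [Finset.sum_insert hx, Finset.sum_insert hx, pfilter_add, ih]

lemma support_pfilter_subset (P : (Fin n →₀ ℕ) → Prop) (f : MvPolynomial (Fin n) K) :
    (pfilter P f).support ⊆ f.support := by
  classical
  intro w hw
  rw [MvPolynomial.mem_support_iff] at hw ⊢
  rw [coeff_pfilter] at hw
  intro h0
  apply hw
  split_ifs <;> simp [h0]

lemma prop_of_mem_support_pfilter {P : (Fin n →₀ ℕ) → Prop} {f : MvPolynomial (Fin n) K}
    {w : Fin n →₀ ℕ} (hw : w ∈ (pfilter P f).support) : P w := by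
  classical
  rw [MvPolynomial.mem_support_iff, coeff_pfilter] at hw
  by_contra h
  rw [if_neg h] at hw
  exact hw rfl

lemma mem_support_pfilter {P : (Fin n →₀ ℕ) → Prop} {f : MvPolynomial (Fin n) K}
    {w : Fin n →₀ ℕ} (hw : w ∈ f.support) (hP : P w) : w ∈ (pfilter P f).support := by
  classical
  rw [MvPolynomial.mem_support_iff] at hw ⊢
  rwa [coeff_pfilter, if_pos hP]

lemma pfilter_eq_self {P : (Fin n →₀ ℕ) → Prop} {f : MvPolynomial (Fin n) K}
    (h : ∀ v ∈ f.support, P v) : pfilter P f = f := by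
  classical
  ext w
  rw [coeff_pfilter]
  by_cases hw : w ∈ f.support
  · rw [if_pos (h w hw)]
  · rw [MvPolynomial.notMem_support_iff] at hw
    rw [hw]; split_ifs <;> rfl

lemma pfilter_eq_zero {P : (Fin n →₀ ℕ) → Prop} {f : MvPolynomial (Fin n) K}
    (h : ∀ v ∈ f.support, ¬ P v) : pfilter P f = 0 := by
  classical
  ext w
  rw [coeff_pfilter, coeff_zero]
  by_cases hw : w ∈ f.support
  · rw [if_neg (h w hw)]
  · rw [MvPolynomial.notMem_support_iff] at hw
    rw [hw]; split_ifs <;> rfl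

lemma pfilter_mul {P Q : (Fin n →₀ ℕ) → Prop} {g : MvPolynomial (Fin n) K}
    (hPQ : ∀ v : Fin n →₀ ℕ, ∀ m ∈ g.support, (P (v + m) ↔ Q v))
    (p : MvPolynomial (Fin n) K) :
    pfilter P (p * g) = pfilter Q p * g := by
  classical
  induction p using MvPolynomial.induction_on' with
  | add p q hp hq => rw [add_mul, pfilter_add, hp, hq, pfilter_add, add_mul]
  | monomial v a =>
    have hsupp : ∀ w ∈ (monomial v a * g).support, ∃ m ∈ g.support, w = v + m := by
      intro w hw
      have := MvPolynomial.support_mul (monomial v a) g hw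
      rw [Finset.mem_add] at this
      obtain ⟨x, hx, y, hy, rfl⟩ := this
      have hx' := MvPolynomial.support_monomial_subset hx
      rw [Finset.mem_singleton] at hx'
      exact ⟨y, hy, by rw [hx']⟩
    by_cases hq : Q v
    · rw [pfilter_eq_self (f := monomial v a * g), pfilter_eq_self (f := monomial v a)]
      · intro w hw
        have := MvPolynomial.support_monomial_subset hw
        rw [Finset.mem_singleton] at this
        rwa [this]
      · intro w hw
        obtain ⟨m, hm, rfl⟩ := hsupp w hw
        exact (hPQ v m hm).mpr hq
    · rw [pfilter_eq_zero (f := monomial v a * g), pfilter_eq_zero (f := monomial v a),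
        zero_mul]
      · intro w hw
        have := MvPolynomial.support_monomial_subset hw
        rw [Finset.mem_singleton] at this
        rwa [this]
      · intro w hw
        obtain ⟨m, hm, rfl⟩ := hsupp w hw
        rw [hPQ v m hm]
        exact hq

/-- The homogeneous component of an element of a `c`-homogeneous ideal stays in the ideal. -/
lemma pfilter_mem_of_cHomIdeal {c : Fin n → ℤ} {I : Ideal (MvPolynomial (Fin n) K)}
    (hI : CHomIdeal c I) (t : Fin n →₀ ℕ) {f : MvPolynomial (Fin n) K} (hf : f ∈ I) :
    pfilter (fun v => SameDeg c v t) f ∈ I := by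
  classical
  obtain ⟨G, hG, rfl⟩ := hI
  obtain ⟨cf, hsupp, hsum⟩ := Submodule.mem_span_set.mp hf
  rw [← hsum, Finsupp.sum, pfilter_finset_sum]
  refine Ideal.sum_mem _ fun m hm => ?_
  have hmG : m ∈ G := hsupp hm
  by_cases h0 : m = 0
  · rw [h0, smul_zero, pfilter_zero]
    exact Ideal.zero_mem _
  · obtain ⟨m₀, hm₀⟩ := Finset.nonempty_iff_ne_empty.mpr
      (fun he => h0 (MvPolynomial.support_eq_empty.mp he))
    rw [smul_eq_mul, pfilter_mul (Q := fun v => SameDeg c (v + m₀) t)]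
    · exact Ideal.mul_mem_left _ _ (Ideal.subset_span hmG)
    · intro v mm hmm
      have hsd : SameDeg c (v + mm) (v + m₀) :=
        sameDeg_add_left (hG m hmG mm hmm m₀ hm₀) v
      exact ⟨fun h => sameDeg_trans (sameDeg_symm hsd) h, fun h => sameDeg_trans hsd h⟩

/-- If `x^δ` is in the initial ideal, some leading exponent of `I` divides `δ`. -/
lemma exists_leadExp_le {lt : (Fin n →₀ ℕ) → (Fin n →₀ ℕ) → Prop}
    {I : Ideal (MvPolynomial (Fin n) K)} {δ : Fin n →₀ ℕ}
    (h : monomial δ (1 : K) ∈ initialIdeal lt I) :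
    ∃ f ∈ I, ∃ u, IsLeadExp lt f u ∧ u ≤ δ := by
  classical
  rw [initialIdeal] at h
  obtain ⟨cf, hsupp, hsum⟩ := Submodule.mem_span_set.mp h
  by_contra hc
  push_neg at hc
  have h1 : coeff δ (cf.sum fun mi r => r • mi) = 1 := by
    rw [hsum, coeff_monomial, if_pos rfl]
  rw [Finsupp.sum, coeff_sum] at h1
  have h0 : ∀ m ∈ cf.support, coeff δ (cf m • m) = 0 := by
    intro m hm
    obtain ⟨f, hfI, u, hu, rfl⟩ := hsupp hm
    rw [smul_eq_mul, coeff_mul_monomial', if_neg (hc f hfI u hu)]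
  rw [Finset.sum_congr rfl h0, Finset.sum_const_zero] at h1
  exact one_ne_zero h1.symm

/-- Multiplying by a monomial shifts the leading exponent. -/
lemma isLeadExp_monomial_mul {lt : (Fin n →₀ ℕ) → (Fin n →₀ ℕ) → Prop}
    (hlt : IsTermOrder n lt) {f : MvPolynomial (Fin n) K} {u : Fin n →₀ ℕ}
    (hf : IsLeadExp lt f u) (w : Fin n →₀ ℕ) :
    IsLeadExp lt (monomial w (1 : K) * f) (w + u) := by
  constructor
  · rw [MvPolynomial.mem_support_iff, coeff_monomial_mul', if_pos le_self_add,
      add_tsub_cancel_left, one_mul]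
    exact MvPolynomial.mem_support_iff.mp hf.1
  · intro v hv hvne
    rw [MvPolynomial.mem_support_iff, coeff_monomial_mul'] at hv
    by_cases hle : w ≤ v
    · rw [if_pos hle, one_mul] at hv
      have hs : v - w ∈ f.support := MvPolynomial.mem_support_iff.mpr hv
      have hne : v - w ≠ u := by
        intro h
        apply hvne
        rw [← tsub_add_cancel_of_le hle, h, add_comm]
      have h2 := hlt.2.2.2.2 _ _ w (hf.2 _ hs hne)
      rwa [tsub_add_cancel_of_le hle, add_comm u w] at h2
    · rw [if_neg hle] at hv
      exact absurd rfl hv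

lemma cpos_apply (c : Fin n → ℤ) (j : Fin n) : cpos c j = (c j).toNat := by
  rw [cpos, Finsupp.equivFunOnFinite_symm_apply_apply]

lemma cneg_apply (c : Fin n → ℤ) (j : Fin n) : cneg c j = (-(c j)).toNat := by
  rw [cneg, Finsupp.equivFunOnFinite_symm_apply_apply]

lemma cpos_neg (c : Fin n → ℤ) : cpos (-c) = cneg c := by
  ext j
  rw [cpos_apply, cneg_apply, Pi.neg_apply]

lemma cneg_neg (c : Fin n → ℤ) : cneg (-c) = cpos c := by
  ext j
  rw [cpos_apply, cneg_apply, Pi.neg_apply, neg_neg]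

lemma distRel_neg {c : Fin n → ℤ} {u v : Fin n →₀ ℕ} {ℓ : ℤ} (h : DistRel c u v ℓ) :
    DistRel (-c) u v (-ℓ) := fun i => by rw [Pi.neg_apply, h i]; ring

lemma eq_of_distRel_zero {c : Fin n → ℤ} {u v : Fin n →₀ ℕ} (h : DistRel c u v 0) : u = v := by
  ext j
  have := h j
  rw [zero_mul, sub_eq_zero] at this
  exact_mod_cast this

/-- If `u - v = ℓc` with `ℓ < 0` and `x^{c⁺} ≺ x^{c⁻}`, then `x^v ≺ x^u`. -/
lemma lt_of_distRel_neg {lt : (Fin n →₀ ℕ) → (Fin n →₀ ℕ) → Prop} (hlt : IsTermOrder n lt)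
    {c : Fin n → ℤ} (hlo : lt (cpos c) (cneg c)) {v δ : Fin n →₀ ℕ} {ℓ : ℤ}
    (hd : DistRel c v δ ℓ) (hneg : ℓ < 0) : lt δ v := by
  obtain ⟨m, hm⟩ : ∃ m : ℕ, (-ℓ) = (m : ℤ) + 1 := by
    refine ⟨(-ℓ).toNat - 1, ?_⟩
    have h1 : 1 ≤ -ℓ := by omega
    omega
  have key : δ + (m + 1) • cneg c = v + (m + 1) • cpos c := by
    ext j
    have hdj := hd j
    have hcast : ((δ + (m + 1) • cneg c) j : ℤ) = ((v + (m + 1) • cpos c) j : ℤ) := by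
      simp only [Finsupp.add_apply, Finsupp.smul_apply, smul_eq_mul, cpos_apply, cneg_apply]
      push_cast
      rcases le_or_gt 0 (c j) with hcj | hcj
      · rw [Int.toNat_of_nonneg hcj, Int.toNat_of_nonpos (by omega)]
        have : ℓ = -((m : ℤ) + 1) := by omega
        rw [this] at hdj
        push_cast
        nlinarith [hdj]
      · rw [Int.toNat_of_nonpos (le_of_lt hcj), Int.toNat_of_nonneg (by omega)]
        have : ℓ = -((m : ℤ) + 1) := by omega
        rw [this] at hdj
        push_cast
        nlinarith [hdj]
    exact_mod_cast hcast
  have h1 : lt ((m + 1) • cpos c) ((m + 1) • cneg c) := TermOrder.smul hlt hlo m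
  have h2 : lt (δ + (m + 1) • cpos c) (δ + (m + 1) • cneg c) := by
    have := hlt.2.2.2.2 _ _ δ h1
    rwa [add_comm _ δ, add_comm _ δ] at this
  rw [key] at h2
  exact TermOrder.cancel hlt (by rwa [add_comm δ, add_comm v] at h2)

/-- If `v = re_i + ℓc ≥ 0` with `ℓ > 0` and `c⁻ ≠ 0`, then `c_i < 0`. -/
lemma ci_neg_of_distRel_pos {c : Fin n → ℤ} (hcn : cneg c ≠ 0) {v : Fin n →₀ ℕ} {i : Fin n}
    {r : ℕ} {ℓ : ℤ} (hd : DistRel c v (Finsupp.single i r) ℓ) (hpos : 0 < ℓ) : c i < 0 := by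
  obtain ⟨k, hk⟩ := Finsupp.ne_iff.mp hcn
  rw [Finsupp.coe_zero, Pi.zero_apply, cneg_apply] at hk
  have hck : c k < 0 := by omega
  rcases eq_or_ne k i with rfl | hne
  · exact hck
  · exfalso
    have hdk := hd k
    rw [Finsupp.single_apply, if_neg (Ne.symm hne)] at hdk
    have hvk : (0 : ℤ) ≤ (v k : ℤ) := Int.natCast_nonneg _
    have hmul : ℓ * c k < 0 := mul_neg_of_pos_of_neg hpos hck
    push_cast at hdk
    linarith

end Aux

/-- If `x_i^r` lies in both initial ideals `M = in_≺(I)` and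
`N = in_≺'(I)` of a `ℤⁿ/ℤc`-homogeneous ideal `I` (for a positive grading), then
`x_i^r ∈ I`. -/
theorem pow_mem_of_mem_both_initial_ideals {n : ℕ} {K : Type*} [Field K] (c : Fin n → ℤ)
    (hcp : cpos c ≠ 0) (hcn : cneg c ≠ 0)
    (lt lt' : (Fin n →₀ ℕ) → (Fin n →₀ ℕ) → Prop)
    (hlt : IsTermOrder n lt) (hlt' : IsTermOrder n lt')
    (hlo : lt (cpos c) (cneg c)) (hlo' : lt' (cneg c) (cpos c))
    (I : Ideal (MvPolynomial (Fin n) K)) (hI : CHomIdeal c I)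
    (M N : Ideal (MvPolynomial (Fin n) K))
    (hM : M = initialIdeal lt I) (hN : N = initialIdeal lt' I)
    (i : Fin n) (r : ℕ) (hr : 1 ≤ r)
    (hMm : (monomial (Finsupp.single i r) (1 : K)) ∈ M)
    (hNm : (monomial (Finsupp.single i r) (1 : K)) ∈ N) :
    (monomial (Finsupp.single i r) (1 : K)) ∈ I := by
  set δ := Finsupp.single i r with hδ
  have build : ∀ (ltt : (Fin n →₀ ℕ) → (Fin n →₀ ℕ) → Prop), IsTermOrder n ltt →
      monomial δ (1 : K) ∈ initialIdeal ltt I →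
      ∃ h ∈ I, IsLeadExp ltt h δ ∧ ∀ v ∈ h.support, SameDeg c v δ := by
    intro ltt hltt hmem
    obtain ⟨f, hfI, u, hu, hle⟩ := exists_leadExp_le hmem
    have hδu : δ - u + u = δ := tsub_add_cancel_of_le hle
    have hf2 : monomial (δ - u) (1 : K) * f ∈ I := Ideal.mul_mem_left _ _ hfI
    have hlead2 : IsLeadExp ltt (monomial (δ - u) (1 : K) * f) δ := by
      have h := isLeadExp_monomial_mul hltt hu (δ - u)
      rwa [hδu] at h
    refine ⟨pfilter (fun v => SameDeg c v δ) _, pfilter_mem_of_cHomIdeal hI δ hf2,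
      ⟨?_, ?_⟩, ?_⟩
    · exact mem_support_pfilter hlead2.1 (sameDeg_refl c δ)
    · intro v hv hvne
      exact hlead2.2 v (support_pfilter_subset _ _ hv) hvne
    · intro v hv
      exact prop_of_mem_support_pfilter (P := fun v => SameDeg c v δ) hv
  obtain ⟨f₃, hf₃I, hflead, hfdeg⟩ := build lt hlt (hM ▸ hMm)
  obtain ⟨g₃, hg₃I, hglead, hgdeg⟩ := build lt' hlt' (hN ▸ hNm)
  have extract : ∀ h : MvPolynomial (Fin n) K, h ∈ I → δ ∈ h.support →
      (∀ v ∈ h.support, v = δ) → monomial δ (1 : K) ∈ I := by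
    intro h hhI hδs hall
    have hcoeff : coeff δ h ≠ 0 := MvPolynomial.mem_support_iff.mp hδs
    have heq : monomial δ (1 : K) = C (coeff δ h)⁻¹ * h := by
      ext w
      rcases eq_or_ne w δ with rfl | hne
      · rw [coeff_C_mul, coeff_monomial, if_pos rfl, inv_mul_cancel₀ hcoeff]
      · have hw : coeff w h = 0 :=
          MvPolynomial.notMem_support_iff.mp (fun hw => hne (hall w hw))
        rw [coeff_C_mul, coeff_monomial, if_neg (fun hh => hne hh.symm), hw, mul_zero]
    rw [heq]
    exact Ideal.mul_mem_left _ _ hhI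
  by_cases hf : ∀ v ∈ f₃.support, v = δ
  · exact extract f₃ hf₃I hflead.1 hf
  by_cases hg : ∀ v ∈ g₃.support, v = δ
  · exact extract g₃ hg₃I hglead.1 hg
  exfalso
  push_neg at hf hg
  obtain ⟨vf, hvf, hvfne⟩ := hf
  obtain ⟨vg, hvg, hvgne⟩ := hg
  obtain ⟨ℓf, hdf⟩ := hfdeg vf hvf
  obtain ⟨ℓg, hdg⟩ := hgdeg vg hvg
  have hℓf : 0 < ℓf := by
    rcases lt_trichotomy ℓf 0 with hneg | h0 | hpos
    · exact absurd (hflead.2 vf hvf hvfne)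
        (TermOrder.asymm hlt (lt_of_distRel_neg hlt hlo hdf hneg))
    · exact absurd (eq_of_distRel_zero (h0 ▸ hdf)) hvfne
    · exact hpos
  have hcineg : c i < 0 := ci_neg_of_distRel_pos hcn (hδ ▸ hdf) hℓf
  have hlo'' : lt' (cpos (-c)) (cneg (-c)) := by rw [cpos_neg, cneg_neg]; exact hlo'
  have hdg' : DistRel (-c) vg δ (-ℓg) := distRel_neg hdg
  have hℓg : 0 < -ℓg := by
    rcases lt_trichotomy (-ℓg) 0 with hneg | h0 | hpos
    · exact absurd (hglead.2 vg hvg hvgne)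
        (TermOrder.asymm hlt' (lt_of_distRel_neg hlt' hlo'' hdg' hneg))
    · exact absurd (eq_of_distRel_zero (c := -c) (by rwa [h0] at hdg')) hvgne
    · exact hpos
  have hcn' : cneg (-c) ≠ 0 := by rw [cneg_neg]; exact hcp
  have hcipos := ci_neg_of_distRel_pos hcn' (hδ ▸ hdg') hℓg
  rw [Pi.neg_apply] at hcipos
  omega
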